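/- Let n ≥ 2. If over every algebraically closed field of characteristic 0 every Casas–Alvero polynomial of degree n is an n-th power of a linear polynomial, then the set of bad primes for n is finite. -/

import Mathlib

open Polynomial MvPolynomial

/-- `f` is a Casas–Alvero polynomial of degree `n`: it is monic of degree `n` and for each
`i ∈ {1, …, n-1}` it has a nonconstant common factor with its `i`-th Hasse derivative. -/
def IsCasasAlvero {K : Type} [Field K] (n : ℕ) (f : K[X]) : Prop :=
  f.Monic ∧ f.natDegree = n ∧
    ∀ i ∈ Finset.Ioo 0 n,
      ∃ g : K[X], 0 < g.degree ∧ g ∣ f ∧ g ∣ Polynomial.hasseDeriv i f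

/-- `p` is a bad prime for `n`: `p` is prime and there are an algebraically closed field `K` of
characteristic `p` and a Casas–Alvero polynomial of degree `n` over `K` which is not an `n`-th
power of a linear polynomial. -/
def IsBadPrime (n p : ℕ) : Prop :=
  p.Prime ∧ ∃ (K : Type) (_ : Field K), IsAlgClosed K ∧ CharP K p ∧
    ∃ f : K[X], IsCasasAlvero n f ∧ ¬ ∃ b : K, f = (Polynomial.X - Polynomial.C b) ^ n

/-- The involution `Φ_j` on `K[x_1,…,x_m]`, sending `x_i ↦ x_i - x_j` for `i ≠ j` and
`x_j ↦ -x_j`. -/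
noncomputable def Phi (K : Type) [CommRing K] {m : ℕ} (j : Fin m) :
    MvPolynomial (Fin m) K →ₐ[K] MvPolynomial (Fin m) K :=
  MvPolynomial.aeval fun i =>
    if i = j then -MvPolynomial.X j else MvPolynomial.X i - MvPolynomial.X j

/-- `Φ_j` for `j ∈ {1,…,n}` acting on `K[x_1,…,x_{n-1}]`; for `j = n` (the last index of `Fin n`)
this is the identity. -/
noncomputable def PhiFull (K : Type) [CommRing K] (n : ℕ) (j : Fin n) :
    MvPolynomial (Fin (n - 1)) K →ₐ[K] MvPolynomial (Fin (n - 1)) K :=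
  if h : (j : ℕ) < n - 1 then Phi K ⟨j, h⟩ else AlgHom.id K _

/-- `G_{T,i} = Φ_{j_i}(σ_i)`, where `i` ranges over `Fin (n-1)` (representing the degree `i+1`). -/
noncomputable def G (K : Type) [CommRing K] (n : ℕ) (T : Fin (n - 1) → Fin n)
    (i : Fin (n - 1)) : MvPolynomial (Fin (n - 1)) K :=
  PhiFull K n (T i) (MvPolynomial.esymm (Fin (n - 1)) K ((i : ℕ) + 1))

/-- `d = (n² - 3n + 4)/2`. -/
def casasD (n : ℕ) : ℕ := (n ^ 2 - 3 * n + 4) / 2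

/-- `C = binom((n²-n)/2, n-2)`, the number of monomials of degree `d` in `n-1` variables. -/
def casasC (n : ℕ) : ℕ := Nat.choose ((n ^ 2 - n) / 2) (n - 2)

/-- `D = Σ_{i=1}^{n-1} binom(d-i+n-2, n-2)`, the number of rows of `M_T`. -/
def casasDD (n : ℕ) : ℕ :=
  ∑ i ∈ Finset.Icc 1 (n - 1), Nat.choose (casasD n - i + n - 2) (n - 2)

/-- The matrix `M_T` over `ℤ`, whose rows, indexed by pairs `(i, α)` with `|α| = d - i`, are the
coefficient vectors of `x^α · G_{T,i}` with respect to the monomials of degree `d`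
(a monomial of degree `e` in `n-1` variables is encoded as an element of `Sym (Fin (n-1)) e`). -/
noncomputable def casasM (n : ℕ) (T : Fin (n - 1) → Fin n) :
    Matrix ((i : Fin (n - 1)) × Sym (Fin (n - 1)) (casasD n - ((i : ℕ) + 1)))
      (Sym (Fin (n - 1)) (casasD n)) ℤ :=
  fun r c =>
    MvPolynomial.coeff (Multiset.toFinsupp (c : Multiset (Fin (n - 1))))
      (MvPolynomial.monomial (Multiset.toFinsupp (r.2 : Multiset (Fin (n - 1)))) 1 * G ℤ n T r.1)

/-- `J_T`: the greatest common divisor of all `C × C` minors of `M_T`. -/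
noncomputable def casasJ (n : ℕ) (T : Fin (n - 1) → Fin n) : ℤ :=
  Finset.gcd (Finset.univ.filter fun
      f : Sym (Fin (n - 1)) (casasD n) →
        (i : Fin (n - 1)) × Sym (Fin (n - 1)) (casasD n - ((i : ℕ) + 1)) =>
      Function.Injective f)
    fun f => ((casasM n T).submatrix f id).det

/-- The upper bound `C! · ∏_{i=1}^{n-1} binom(i+n-2, n-2)^binom(d-i+n-2, n-2)`. -/
def casasBound (n : ℕ) : ℕ :=
  (casasC n).factorial * ∏ i ∈ Finset.Icc 1 (n - 1),
    Nat.choose (i + n - 2) (n - 2) ^ Nat.choose (casasD n - i + n - 2) (n - 2)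

section CasasUltra

/-- The ultrafilter ideal in a product of fields. -/
def uIdeal {ι : Type} (K : ι → Type) [∀ i, Field (K i)] (U : Ultrafilter ι) :
    Ideal (∀ i, K i) where
  carrier := {x | {i | x i = 0} ∈ U}
  add_mem' := by
    intro a b ha hb
    filter_upwards [ha, hb] with i h1 h2
    simp [h1, h2]
  zero_mem' := by
    have h : {i : _ | (0 : (∀ i, K i)) i = 0} = Set.univ := by ext i; simp
    simp only [Set.mem_setOf_eq] at *
    exact h ▸ Filter.univ_mem
  smul_mem' := by
    intro c x hx
    filter_upwards [hx] with i h
    simp [h]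

theorem mem_uIdeal_iff {ι : Type} (K : ι → Type) [∀ i, Field (K i)] (U : Ultrafilter ι)
    {x : ∀ i, K i} : x ∈ uIdeal K U ↔ {i | x i = 0} ∈ U := Iff.rfl

theorem uIdeal_maximal {ι : Type} (K : ι → Type) [∀ i, Field (K i)] (U : Ultrafilter ι) :
    (uIdeal K U).IsMaximal := by
  rw [Ideal.isMaximal_iff]
  refine ⟨?_, ?_⟩
  · intro h
    have h2 : {i | (1 : (∀ i, K i)) i = 0} ∈ U := h
    have he : {i : ι | (1 : (∀ i, K i)) i = 0} = ∅ := by ext i; simp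
    rw [he] at h2
    exact Filter.empty_notMem (U : Filter ι) h2
  · intro I x hJI hx hxI
    have hs : {i | x i = 0}ᶜ ∈ U := Ultrafilter.compl_mem_iff_notMem.2 hx
    have h1 : (1 : ∀ i, K i) - (fun i => (x i)⁻¹) * x ∈ uIdeal K U := by
      rw [mem_uIdeal_iff]
      filter_upwards [hs] with i hi
      simp only [Pi.sub_apply, Pi.mul_apply, Pi.one_apply]
      rw [inv_mul_cancel₀ hi, sub_self]
    have := I.add_mem (I.mul_mem_left (fun i => (x i)⁻¹) hxI) (hJI h1)
    simpa using this

noncomputable instance uField {ι : Type} (K : ι → Type) [∀ i, Field (K i)]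
    (U : Ultrafilter ι) : Field ((∀ i, K i) ⧸ uIdeal K U) :=
  haveI := uIdeal_maximal K U
  Ideal.Quotient.field (uIdeal K U)

theorem uMk_eq_zero {ι : Type} (K : ι → Type) [∀ i, Field (K i)] (U : Ultrafilter ι)
    {x : ∀ i, K i} :
    Ideal.Quotient.mk (uIdeal K U) x = 0 ↔ {i | x i = 0} ∈ U := by
  rw [Ideal.Quotient.eq_zero_iff_mem, mem_uIdeal_iff]

theorem uMk_eq_iff {ι : Type} (K : ι → Type) [∀ i, Field (K i)] (U : Ultrafilter ι)
    {x y : ∀ i, K i} :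
    Ideal.Quotient.mk (uIdeal K U) x = Ideal.Quotient.mk (uIdeal K U) y ↔
      {i | x i = y i} ∈ U := by
  rw [Ideal.Quotient.mk_eq_mk_iff_sub_mem, mem_uIdeal_iff]
  have he : {i | (x - y) i = 0} = {i | x i = y i} := by ext i; simp [sub_eq_zero]
  rw [he]

theorem eval_map_hom {R S : Type} [CommRing R] [CommRing S] (φ : R →+* S) (F : R[X]) (x : R) :
    (F.map φ).eval (φ x) = φ (F.eval x) := by
  rw [Polynomial.eval_map, Polynomial.eval₂_at_apply]

theorem hasseDeriv_map_comm {R S : Type} [CommRing R] [CommRing S] (φ : R →+* S) (k : ℕ)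
    (F : R[X]) :
    (Polynomial.hasseDeriv k F).map φ = Polynomial.hasseDeriv k (F.map φ) := by
  ext m
  simp [Polynomial.hasseDeriv_coeff, Polynomial.coeff_map]

/-- A packaged witness for a bad prime. -/
structure BadWitness (n p : ℕ) : Type 1 where
  K : Type
  [fld : Field K]
  alg : IsAlgClosed K
  chr : CharP K p
  f : K[X]
  ca : IsCasasAlvero n f
  npow : ¬ ∃ b : K, f = (Polynomial.X - Polynomial.C b) ^ n

noncomputable def badWitness {n p : ℕ} (h : IsBadPrime n p) : BadWitness n p :=
  let K := h.2.choose
  let e1 := h.2.choose_spec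
  let fld : Field K := e1.choose
  let e2 := e1.choose_spec
  let f := e2.2.2.choose
  @BadWitness.mk n p K fld e2.1 e2.2.1 f e2.2.2.choose_spec.1 e2.2.2.choose_spec.2

end CasasUltra

theorem badPrimes_finite (n : ℕ) (hn : 2 ≤ n)
    (hCA0 : ∀ (K : Type) [Field K] [IsAlgClosed K] [CharP K 0],
      ∀ f : Polynomial K, IsCasasAlvero n f →
        ∃ b : K, f = (Polynomial.X - Polynomial.C b) ^ n) :
    {p : ℕ | IsBadPrime n p}.Finite := by
  by_contra hfin
  haveI hinf : Infinite ↥{p : ℕ | IsBadPrime n p} := Set.infinite_coe_iff.2 hfin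
  set ι := ↥{p : ℕ | IsBadPrime n p} with hι
  let W : ∀ i : ι, BadWitness n i.1 := fun i => badWitness i.2
  let K : ι → Type := fun i => (W i).K
  letI : ∀ i, Field (K i) := fun i => (W i).fld
  -- the ultrafilter
  let U : Ultrafilter ι := Ultrafilter.of Filter.cofinite
  have hUcof : (U : Filter ι) ≤ Filter.cofinite := Ultrafilter.of_le _
  have hfin_not_mem : ∀ s : Set ι, s.Finite → s ∉ U := by
    intro s hs hmem
    have : sᶜ ∈ Filter.cofinite := by rw [Filter.mem_cofinite, compl_compl]; exact hs
    exact (Ultrafilter.compl_mem_iff_notMem.1 (hUcof this)) hmem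
  -- the ultraproduct field
  let R := ∀ i, K i
  let π : R →+* ((∀ i, K i) ⧸ uIdeal K U) := Ideal.Quotient.mk (uIdeal K U)
  let L := (∀ i, K i) ⧸ uIdeal K U
  have hπsurj : Function.Surjective π := Ideal.Quotient.mk_surjective
  obtain ⟨i0⟩ := (inferInstance : Nonempty ι)
  haveI : Nontrivial R := ⟨0, 1, fun h => by
    have := congrFun h i0; exact zero_ne_one this⟩
  -- characteristic zero
  haveI hchar : CharP L 0 := by
    constructor
    intro m
    rw [zero_dvd_iff]
    constructor
    · intro hm
      by_contra hm0
      have : π (m : R) = 0 := by rw [map_natCast]; exact hm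
      rw [uMk_eq_zero] at this
      have hsub : {i : ι | ((m : R)) i = 0} ⊆ {i : ι | i.1 ≤ m} := by
        intro i hi
        simp only [Set.mem_setOf_eq, Pi.natCast_apply] at hi ⊢
        haveI := (W i).chr
        have hdvd : (i.1 : ℕ) ∣ m := (CharP.cast_eq_zero_iff (K i) i.1 m).1 hi
        exact Nat.le_of_dvd (Nat.pos_of_ne_zero hm0) hdvd
      have hfs : {i : ι | i.1 ≤ m}.Finite := by
        have : {i : ι | i.1 ≤ m} = (fun i : ι => i.1) ⁻¹' (Set.Iic m) := rfl
        rw [this]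
        exact Set.Finite.preimage (Set.injOn_of_injective Subtype.coe_injective)
          (Set.finite_Iic m)
      exact hfin_not_mem _ (hfs.subset hsub) this
    · rintro rfl; simp
  -- algebraically closed
  haveI halg : IsAlgClosed L := by
    apply IsAlgClosed.of_exists_root
    intro q hq hirr
    set m := q.natDegree with hmdef
    have hm1 : 1 ≤ m := hirr.natDegree_pos
    choose ℓ hℓ using hπsurj
    set Q : R[X] := Polynomial.X ^ m +
      ∑ k ∈ Finset.range m, Polynomial.C (ℓ (q.coeff k)) * Polynomial.X ^ k with hQdef
    have hQcoeff : ∀ k, Q.coeff k =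
        if k < m then ℓ (q.coeff k) else if k = m then 1 else 0 := by
      intro k
      simp only [hQdef, Polynomial.coeff_add, Polynomial.coeff_X_pow,
        Polynomial.finset_sum_coeff, Polynomial.coeff_C_mul, mul_ite, mul_one, mul_zero,
        Finset.sum_ite_eq, Finset.mem_range]
      rcases lt_trichotomy k m with h | h | h
      · simp [h, Nat.ne_of_lt h]
      · simp [h]
      · simp [Nat.ne_of_gt h, Nat.lt_asymm h]
    have hQle : Q.natDegree ≤ m := by
      apply Polynomial.natDegree_le_iff_coeff_eq_zero.2
      intro k hk
      rw [hQcoeff]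
      simp [Nat.lt_asymm hk, Nat.ne_of_gt hk]
    have hQmonic : Q.Monic := by
      apply Polynomial.monic_of_natDegree_le_of_coeff_eq_one m hQle
      rw [hQcoeff]; simp
    have hQmap : Q.map π = q := by
      ext k
      rw [Polynomial.coeff_map, hQcoeff]
      rcases lt_trichotomy k m with h | h | h
      · simp [h, hℓ]
      · subst h; simp [hq.coeff_natDegree, hmdef]
      · rw [if_neg (Nat.lt_asymm h), if_neg (Nat.ne_of_gt h), map_zero,
          Polynomial.coeff_eq_zero_of_natDegree_lt h]
    have hroot : ∀ i, ∃ x : K i, ((Q.map (Pi.evalRingHom K i)).eval x = 0) := by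
      intro i
      haveI := (W i).alg
      have hmon : (Q.map (Pi.evalRingHom K i)).Monic := hQmonic.map _
      have hdeg : (Q.map (Pi.evalRingHom K i)).natDegree = m := by
        rw [hQmonic.natDegree_map]
        exact le_antisymm hQle (Polynomial.le_natDegree_of_ne_zero (by
          rw [hQcoeff]; simp))
      obtain ⟨x, hx⟩ := IsAlgClosed.exists_root (Q.map (Pi.evalRingHom K i)) (by
        rw [Polynomial.degree_eq_natDegree hmon.ne_zero, hdeg]
        exact_mod_cast Nat.one_le_iff_ne_zero.1 hm1)
      exact ⟨x, hx⟩
    choose r hr using hroot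
    refine ⟨π r, ?_⟩
    have hQr : Q.eval r = 0 := by
      funext i
      have := eval_map_hom (Pi.evalRingHom K i) Q r
      simp only [Pi.evalRingHom_apply] at this
      calc Q.eval r i = (Q.map (Pi.evalRingHom K i)).eval (r i) := this.symm
        _ = 0 := hr i
    show q.IsRoot (π r)
    rw [Polynomial.IsRoot, ← hQmap, eval_map_hom, hQr, map_zero]
  -- the ultraproduct Casas-Alvero polynomial
  let c : ℕ → R := fun k i => ((W i).f).coeff k
  set P : R[X] := ∑ k ∈ Finset.range (n + 1), Polynomial.C (c k) * Polynomial.X ^ k with hPdef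
  have hPcoeff : ∀ k, P.coeff k = if k ≤ n then c k else 0 := by
    intro k
    simp only [hPdef, Polynomial.finset_sum_coeff, Polynomial.coeff_C_mul,
      Polynomial.coeff_X_pow, mul_ite, mul_one, mul_zero, Finset.sum_ite_eq,
      Finset.mem_range, Nat.lt_succ_iff]
  have hmap : ∀ i, P.map (Pi.evalRingHom K i) = (W i).f := by
    intro i
    ext k
    rw [Polynomial.coeff_map, hPcoeff]
    rcases le_or_gt k n with h | h
    · simp [h, c]
    · rw [if_neg (Nat.not_le.2 h), map_zero]
      exact (Polynomial.coeff_eq_zero_of_natDegree_lt (by rw [(W i).ca.2.1]; exact h)).symm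
  have hcn : c n = 1 := by
    funext i
    show ((W i).f).coeff n = 1
    have h := (W i).ca.1.coeff_natDegree
    rwa [(W i).ca.2.1] at h
  have hPn : P.coeff n = 1 := by rw [hPcoeff, if_pos le_rfl, hcn]
  have hPle : P.natDegree ≤ n := by
    apply Polynomial.natDegree_le_iff_coeff_eq_zero.2
    intro k hk
    rw [hPcoeff, if_neg (Nat.not_le.2 hk)]
  have hPmonic : P.Monic := Polynomial.monic_of_natDegree_le_of_coeff_eq_one n hPle hPn
  have hPdeg : P.natDegree = n :=
    le_antisymm hPle (Polynomial.le_natDegree_of_ne_zero (by rw [hPn]; exact one_ne_zero))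
  -- it is Casas-Alvero over L
  have hCA : IsCasasAlvero n (P.map π) := by
    refine ⟨hPmonic.map π, by rw [hPmonic.natDegree_map, hPdeg], ?_⟩
    intro k hk
    have hroots : ∀ i : ι, ∃ b : K i,
        ((W i).f).eval b = 0 ∧ (Polynomial.hasseDeriv k ((W i).f)).eval b = 0 := by
      intro i
      obtain ⟨g, hg0, hgf, hgh⟩ := (W i).ca.2.2 k hk
      haveI := (W i).alg
      obtain ⟨b, hb⟩ := IsAlgClosed.exists_root g (ne_of_gt hg0)
      obtain ⟨u, hu⟩ := hgf
      obtain ⟨v, hv⟩ := hgh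
      refine ⟨b, ?_, ?_⟩
      · rw [hu, Polynomial.eval_mul, hb, zero_mul]
      · rw [hv, Polynomial.eval_mul, hb, zero_mul]
    choose b hb1 hb2 using hroots
    refine ⟨Polynomial.X - Polynomial.C (π b), by simp [Polynomial.degree_X_sub_C], ?_, ?_⟩
    · rw [Polynomial.dvd_iff_isRoot, Polynomial.IsRoot, eval_map_hom]
      have hPb : P.eval b = 0 := by
        funext i
        have := eval_map_hom (Pi.evalRingHom K i) P b
        simp only [Pi.evalRingHom_apply] at this
        calc P.eval b i = (P.map (Pi.evalRingHom K i)).eval (b i) := this.symm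
          _ = ((W i).f).eval (b i) := by rw [hmap]
          _ = 0 := hb1 i
      rw [hPb, map_zero]
    · rw [Polynomial.dvd_iff_isRoot, Polynomial.IsRoot, ← hasseDeriv_map_comm, eval_map_hom]
      have hPb : (Polynomial.hasseDeriv k P).eval b = 0 := by
        funext i
        have := eval_map_hom (Pi.evalRingHom K i) (Polynomial.hasseDeriv k P) b
        simp only [Pi.evalRingHom_apply] at this
        calc (Polynomial.hasseDeriv k P).eval b i
            = ((Polynomial.hasseDeriv k P).map (Pi.evalRingHom K i)).eval (b i) := this.symm
          _ = (Polynomial.hasseDeriv k ((W i).f)).eval (b i) := by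
              rw [hasseDeriv_map_comm, hmap]
          _ = 0 := hb2 i
      rw [hPb, map_zero]
  -- apply the characteristic-zero hypothesis and derive a contradiction
  obtain ⟨β, hβ⟩ := hCA0 L (P.map π) hCA
  obtain ⟨B, rfl⟩ := hπsurj β
  set Gp : R[X] := (Polynomial.X - Polynomial.C B) ^ n with hGpdef
  have hβ' : P.map π = Gp.map π := by
    rw [hβ, hGpdef, Polynomial.map_pow, Polynomial.map_sub, Polynomial.map_X,
      Polynomial.map_C]
  have hGle : Gp.natDegree ≤ n := by
    calc Gp.natDegree ≤ n * (Polynomial.X - Polynomial.C B).natDegree :=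
          Polynomial.natDegree_pow_le
      _ ≤ n * 1 := Nat.mul_le_mul_left n (Polynomial.natDegree_X_sub_C_le B)
      _ = n := mul_one n
  have hDk : ∀ k, {i : ι | (P.coeff k) i = (Gp.coeff k) i} ∈ U := by
    intro k
    have h1 : π (P.coeff k) = π (Gp.coeff k) := by
      have := congrArg (fun q => Polynomial.coeff q k) hβ'
      simpa [Polynomial.coeff_map] using this
    rwa [uMk_eq_iff] at h1
  have hall : ∀ᶠ i in (U : Filter ι), ∀ k ∈ Finset.range (n + 1),
      (P.coeff k) i = (Gp.coeff k) i :=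
    (Filter.eventually_all_finset _).2 fun k _ => hDk k
  obtain ⟨i, hi⟩ := hall.exists
  apply (W i).npow
  refine ⟨B i, ?_⟩
  have h1 : (W i).f = P.map (Pi.evalRingHom K i) := (hmap i).symm
  have h2 : (Polynomial.X - Polynomial.C (B i) : (K i)[X]) ^ n
      = Gp.map (Pi.evalRingHom K i) := by
    rw [hGpdef, Polynomial.map_pow, Polynomial.map_sub, Polynomial.map_X, Polynomial.map_C]
    rfl
  rw [h1, h2]
  ext k
  simp only [Polynomial.coeff_map, Pi.evalRingHom_apply]
  rcases le_or_gt k n with h | h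
  · exact hi k (Finset.mem_range.2 (Nat.lt_succ_of_le h))
  · rw [Polynomial.coeff_eq_zero_of_natDegree_lt (lt_of_le_of_lt hPle h),
      Polynomial.coeff_eq_zero_of_natDegree_lt (lt_of_le_of_lt hGle h)]
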